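/- Let W be a standard Brownian motion. For every u ∈ (0,1], v > 0 and x ≥ u, P( sup_{z ≥ u, z ≤ x} { W(x − z) − W(x) − v z² } > 0 ) ≤ exp(−v² u³ / 8). -/

import Mathlib

open MeasureTheory ProbabilityTheory Set

/-- A standard Brownian motion on `[0,∞)` (extended to `ℝ`). -/
def IsStdBrownianMotion {Ω : Type*} [MeasurableSpace Ω] (μ : Measure Ω)
    (W : Ω → ℝ → ℝ) : Prop :=
  IsProbabilityMeasure μ ∧
  (∀ t : ℝ, Measurable fun ω => W ω t) ∧
  (∀ᵐ ω ∂μ, W ω 0 = 0) ∧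
  (∀ᵐ ω ∂μ, Continuous (W ω)) ∧
  (∀ s t : ℝ, 0 ≤ s → s ≤ t →
    Measure.map (fun ω => W ω t - W ω s) μ = gaussianReal 0 (Real.toNNReal (t - s))) ∧
  (∀ (n : ℕ) (t : ℕ → ℝ), Monotone t → (∀ i, 0 ≤ t i) →
    iIndepFun
      (fun i : Fin n => fun ω => W ω (t (i + 1)) - W ω (t i)) μ)


section AuxLemmas
open Real
open scoped NNReal ENNReal

section Aux

lemma integrable_dirac'' {f : ℝ → ℝ} (hf : Measurable f) (a : ℝ) :
    Integrable f (Measure.dirac a) := by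
  refine ⟨hf.aestronglyMeasurable, ?_⟩
  rw [HasFiniteIntegral, lintegral_dirac' _ (by measurability)]
  exact ENNReal.coe_lt_top

lemma gaussian_shift (c : ℝ) (v : ℝ≥0) (hv : v ≠ 0) (y : ℝ) :
    Real.exp (c * y) * gaussianPDFReal 0 v y
      = Real.exp (c ^ 2 * v / 2) * gaussianPDFReal (c * v) v y := by
  have hvpos : (0:ℝ) < v := by positivity
  unfold gaussianPDFReal
  rw [mul_left_comm, mul_left_comm (Real.exp _)]
  congr 1
  rw [← Real.exp_add, ← Real.exp_add]
  congr 1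
  field_simp
  ring

end Aux

lemma exp_gaussianReal (c : ℝ) (v : ℝ≥0) :
    Integrable (fun y => Real.exp (c * y)) (gaussianReal 0 v) ∧
    ∫ y, Real.exp (c * y) ∂(gaussianReal 0 v) = Real.exp (c ^ 2 * v / 2) := by
  rcases eq_or_ne v 0 with hv | hv
  · subst hv
    rw [gaussianReal_zero_var]
    refine ⟨integrable_dirac'' (by fun_prop) 0, ?_⟩
    rw [integral_dirac]
    simp
  · have hpdf : gaussianPDF 0 v = fun y => ((gaussianPDFReal 0 v y).toNNReal : ℝ≥0∞) := by
      funext y; rfl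
    have hmeas : Measurable fun y => (gaussianPDFReal 0 v y).toNNReal :=
      (measurable_gaussianPDFReal 0 v).real_toNNReal
    have hint2 : Integrable (fun y => Real.exp (c ^ 2 * v / 2) * gaussianPDFReal (c * v) v y) volume :=
      (integrable_gaussianPDFReal (c * v) v).const_mul _
    have hint : Integrable (fun y => Real.exp (c * y) * gaussianPDFReal 0 v y) volume := by
      exact hint2.congr (Filter.Eventually.of_forall fun y => (gaussian_shift c v hv y).symm)
    constructor
    · rw [gaussianReal_of_var_ne_zero _ hv, hpdf]
      rw [integrable_withDensity_iff (by measurability) (by simp [ENNReal.coe_lt_top])]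
      refine hint.congr (Filter.Eventually.of_forall fun y => ?_)
      simp only [ENNReal.coe_toReal, Real.coe_toNNReal _ (gaussianPDFReal_nonneg 0 v y)]
    · rw [gaussianReal_of_var_ne_zero _ hv, hpdf,
        integral_withDensity_eq_integral_smul hmeas]
      have : ∀ y, (gaussianPDFReal 0 v y).toNNReal • Real.exp (c * y)
          = Real.exp (c ^ 2 * v / 2) * gaussianPDFReal (c * v) v y := by
        intro y
        rw [NNReal.smul_def, smul_eq_mul, Real.coe_toNNReal _ (gaussianPDFReal_nonneg 0 v y),
          mul_comm, gaussian_shift c v hv]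
      rw [MeasureTheory.integral_congr_ae (Filter.Eventually.of_forall this),
        integral_const_mul, integral_gaussianPDFReal_eq_one _ hv, mul_one]

lemma exp_rv {Ω : Type*} [MeasurableSpace Ω] {μ : Measure Ω} {Y : Ω → ℝ} (hY : Measurable Y)
    {v : ℝ≥0} (h : Measure.map Y μ = gaussianReal 0 v) (c : ℝ) :
    Integrable (fun ω => Real.exp (c * Y ω)) μ ∧
    ∫ ω, Real.exp (c * Y ω) ∂μ = Real.exp (c ^ 2 * v / 2) := by
  have h1 := (exp_gaussianReal c v).1
  have h2 := (exp_gaussianReal c v).2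
  rw [← h] at h1 h2
  have hg : Measurable fun y : ℝ => Real.exp (c * y) := by fun_prop
  constructor
  · exact (integrable_map_measure hg.aestronglyMeasurable hY.aemeasurable).mp h1
  · rw [integral_map hY.aemeasurable hg.aestronglyMeasurable] at h2
    exact h2

lemma indepFun_of_meas {Ω : Type*} [mΩ : MeasurableSpace Ω] {μ : Measure Ω}
    {M1 M2 : MeasurableSpace Ω} (h : Indep M1 M2 μ) {F G : Ω → ℝ}
    (hF : Measurable[M1] F) (hG : Measurable[M2] G) : IndepFun F G μ :=
  Kernel.indep_of_indep_of_le_left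
    (Kernel.indep_of_indep_of_le_right h hG.comap_le) hF.comap_le

lemma crossing_bound {Ω : Type*} [mΩ : MeasurableSpace Ω] (μ : Measure Ω) (W : Ω → ℝ → ℝ)
    (hW : IsStdBrownianMotion μ W) (x a b : ℝ) (ha : 0 < a) (hb : 0 < b) (hx : 0 ≤ x)
    (n : ℕ) (z : ℕ → ℝ) (hz : Monotone z) (hz0 : z 0 = 0) (hzx : ∀ k, z k ≤ x) :
    μ (⋃ i ∈ Finset.Icc 1 n, {ω | a + b * z i < W ω (x - z i) - W ω x})
      ≤ ENNReal.ofReal (Real.exp (-(2 * a * b))) := by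
  obtain ⟨hprob, hmeas, -, -, hgauss, hindep⟩ := hW
  haveI := hprob
  -- the increasing times
  set t : ℕ → ℝ := fun j => x - z (n - j) with ht_def
  have ht : Monotone t := fun j j' hjj' =>
    sub_le_sub_left (hz (Nat.sub_le_sub_left hjj' n)) x
  have ht0 : ∀ j, 0 ≤ t j := fun j => sub_nonneg.2 (hzx _)
  have htval : ∀ i, i ≤ n → t (n - i) = x - z i := by
    intro i hi
    simp only [ht_def]
    congr 2
    omega
  -- the increments
  set Y : ℕ → Ω → ℝ := fun j ω => W ω (t (j + 1)) - W ω (t j) with hY_def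
  have hYmeas : ∀ j, Measurable (Y j) := fun j => (hmeas _).sub (hmeas _)
  have hYmap : ∀ j, Measure.map (Y j) μ
      = gaussianReal 0 (Real.toNNReal (t (j + 1) - t j)) :=
    fun j => hgauss (t j) (t (j + 1)) (ht0 j) (ht (Nat.le_succ j))
  have hYindep : iIndepFun (fun i : Fin n => Y (i : ℕ)) μ :=
    hindep n t ht ht0
  -- σ-algebras
  set M : Fin n → MeasurableSpace Ω :=
    fun j => MeasurableSpace.comap (Y (j : ℕ)) inferInstance with hM_def
  have hM_le : ∀ j, M j ≤ mΩ := fun j => (hYmeas (j : ℕ)).comap_le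
  have hiIndep : iIndep M μ := hYindep.iIndep
  have hYMmeas : ∀ j : Fin n, Measurable[M j] (Y (j : ℕ)) :=
    fun j => measurable_iff_comap_le.mpr le_rfl
  set MS : ℕ → MeasurableSpace Ω :=
    fun i => ⨆ (j : Fin n) (_ : n - i ≤ (j : ℕ)), M j with hMS_def
  have hMS_le : ∀ i, MS i ≤ mΩ := fun i => iSup₂_le fun j _ => hM_le j
  have hMS_mono : ∀ ⦃i i'⦄, i ≤ i' → MS i ≤ MS i' := by
    intro i i' hii'
    refine iSup₂_le fun j hj => ?_
    exact le_iSup₂_of_le j (by omega) le_rfl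
  -- telescoping sums
  have hsum : ∀ i, i ≤ n → ∀ ω, ∑ j ∈ Finset.Ico (n - i) n, Y j ω
      = W ω x - W ω (x - z i) := by
    intro i hi ω
    have h1 : ∀ m : ℕ, ∑ j ∈ Finset.range m, Y j ω = W ω (t m) - W ω (t 0) :=
      fun m => Finset.sum_range_sub (fun j => W ω (t j)) m
    rw [Finset.sum_Ico_eq_sub _ (Nat.sub_le n i), h1, h1, htval i hi]
    have htn : t n = x := by
      have := htval 0 (Nat.zero_le n)
      simpa [hz0] using this
    rw [htn]
    ring
  -- measurability of the walk wrt the sub-σ-algebras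
  have hS_meas : ∀ i, i ≤ n → Measurable[MS i] (fun ω => W ω (x - z i) - W ω x) := by
    intro i hi
    have hsum_meas : Measurable[MS i] fun ω => ∑ j ∈ Finset.Ico (n - i) n, Y j ω := by
      refine Finset.measurable_sum _ fun j hj => ?_
      rw [Finset.mem_Ico] at hj
      have hjn : j < n := hj.2
      exact (hYMmeas ⟨j, hjn⟩).mono (le_iSup₂_of_le ⟨j, hjn⟩ hj.1 le_rfl) le_rfl
    have : (fun ω => W ω (x - z i) - W ω x)
        = fun ω => -∑ j ∈ Finset.Ico (n - i) n, Y j ω := by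
      funext ω; rw [hsum i hi ω]; ring
    rw [this]
    exact hsum_meas.neg
  -- events and the exponential martingale
  set A : ℕ → Set Ω := fun i => {ω | a + b * z i < W ω (x - z i) - W ω x} with hA_def
  set U : ℕ → Set Ω := fun i => ⋃ i' ∈ Finset.Icc 1 i, A i' with hU_def
  set G : ℕ → Ω → ℝ := fun i ω =>
    Real.exp (2 * b * (W ω (x - z i) - W ω x) - 2 * b ^ 2 * z i) with hG_def
  have hA_measS : ∀ i, i ≤ n → MeasurableSet[MS i] (A i) := fun i hi =>
    measurableSet_lt measurable_const (hS_meas i hi)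
  have hU_measS : ∀ i, i ≤ n → MeasurableSet[MS i] (U i) := by
    intro i hi
    refine MeasurableSet.biUnion (Finset.Icc 1 i).countable_toSet fun i' hi' => ?_
    have hle : i' ≤ i := (Finset.mem_Icc.mp (Finset.mem_coe.mp hi')).2
    exact hMS_mono hle _ (hA_measS i' (le_trans hle hi))
  have hG_measS : ∀ i, i ≤ n → Measurable[MS i] (G i) := by
    intro i hi
    exact ((measurable_const.mul (hS_meas i hi)).sub measurable_const).exp
  have hU_meas : ∀ i, i ≤ n → MeasurableSet (U i) := fun i hi => hMS_le i _ (hU_measS i hi)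
  have hG_pos : ∀ i ω, 0 < G i ω := fun i ω => Real.exp_pos _
  have hz_nonneg : ∀ k, 0 ≤ z k := fun k => hz0 ▸ hz (Nat.zero_le k)
  -- the main induction
  have key : ∀ i, i ≤ n → Integrable (G i) μ ∧ (∫ ω, G i ω ∂μ) = 1 ∧
      Real.exp (2 * a * b) * (μ (U i)).toReal
        ≤ ∫ ω, Set.indicator (U i) (G i) ω ∂μ := by
    intro i
    induction i with
    | zero =>
      intro _
      have hU0 : U 0 = ∅ := by simp [hU_def]; omega
      have hG0 : G 0 = fun _ => 1 := by
        funext ω; simp [hG_def, hz0]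
      rw [hU0, hG0]
      refine ⟨integrable_const 1, by simp, ?_⟩
      simp
    | succ i ih =>
      intro hi1
      have hi : i ≤ n := Nat.le_of_succ_le hi1
      obtain ⟨hGint, hGone, hkey⟩ := ih hi
      -- the new increment
      have hjlt : n - (i + 1) < n := by omega
      set jf : Fin n := ⟨n - (i + 1), hjlt⟩ with hjf_def
      have hjval : (jf : ℕ) + 1 = n - i := by
        show n - (i + 1) + 1 = n - i
        omega
      have hYjf : ∀ ω, Y (jf : ℕ) ω = W ω (x - z i) - W ω (x - z (i + 1)) := by
        intro ω
        show W ω (t ((jf : ℕ) + 1)) - W ω (t (jf : ℕ)) = _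
        rw [hjval]
        show W ω (t (n - i)) - W ω (t (n - (i+1))) = _
        rw [htval i hi, htval (i+1) hi1]
      set R : Ω → ℝ := fun ω =>
        Real.exp ((-(2*b)) * Y (jf : ℕ) ω + (-(2 * b ^ 2 * (z (i+1) - z i)))) with hR_def
      have hR_eq : ∀ ω, R ω
          = Real.exp (-(2 * b ^ 2 * (z (i+1) - z i)))
            * Real.exp ((-(2*b)) * Y (jf : ℕ) ω) := by
        intro ω; rw [hR_def, ← Real.exp_add]; ring_nf
      have hR_measM : Measurable[M jf] R :=
        ((measurable_const.mul (hYMmeas jf)).add measurable_const).exp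
      -- integral of R is 1
      have hvar : ((Real.toNNReal (t ((jf:ℕ) + 1) - t (jf:ℕ))) : ℝ) = z (i+1) - z i := by
        rw [hjval]
        show ((Real.toNNReal (t (n - i) - t (n - (i+1)))) : ℝ) = _
        rw [htval i hi, htval (i+1) hi1, Real.coe_toNNReal]
        · ring
        · have := hz (Nat.le_succ i); linarith
      obtain ⟨hRint0, hRval0⟩ := exp_rv (hYmeas (jf : ℕ)) (hYmap (jf : ℕ)) (-(2*b))
      have hRint : Integrable R μ := by
        refine (hRint0.const_mul (Real.exp (-(2 * b ^ 2 * (z (i+1) - z i))))).congr ?_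
        exact Filter.Eventually.of_forall fun ω => (hR_eq ω).symm
      have hRval : ∫ ω, R ω ∂μ = 1 := by
        rw [MeasureTheory.integral_congr_ae (Filter.Eventually.of_forall hR_eq),
          integral_const_mul, hRval0, ← Real.exp_add, hvar]
        rw [show -(2 * b ^ 2 * (z (i+1) - z i)) + (-(2*b)) ^ 2 * (z (i+1) - z i) / 2 = 0 by ring,
          Real.exp_zero]
      -- multiplicative decomposition of G (i+1)
      have hGsplit : ∀ ω, G (i+1) ω = G i ω * R ω := by
        intro ω
        rw [hR_def, hG_def, ← Real.exp_add]
        show Real.exp (2 * b * (W ω (x - z (i+1)) - W ω x) - 2 * b ^ 2 * z (i+1)) = _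
        congr 1
        rw [hYjf ω]
        ring
      -- independence
      have hIndep_i : Indep (MS i) (M jf) μ := by
        have h := indep_iSup_of_disjoint hM_le hiIndep
          (S := {j : Fin n | n - i ≤ (j : ℕ)}) (T := {jf})
          (by
            rw [Set.disjoint_left]
            rintro j hjS rfl
            revert hjS
            simp only [Set.mem_setOf_eq, hjf_def]
            omega)
        have h1 : (⨆ j ∈ {j : Fin n | n - i ≤ (j : ℕ)}, M j) = MS i := rfl
        have h2 : (⨆ j ∈ ({jf} : Set (Fin n)), M j) = M jf := by simp
        rwa [h1, h2] at h
      have hIF : IndepFun (Set.indicator (U i) (G i)) R μ :=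
        indepFun_of_meas hIndep_i ((hG_measS i hi).indicator (hU_measS i hi)) hR_measM
      have hIF2 : IndepFun (G i) R μ :=
        indepFun_of_meas hIndep_i (hG_measS i hi) hR_measM
      -- integrability and integral of G (i+1)
      have hGfun : G (i+1) = fun ω => G i ω * R ω := funext hGsplit
      have hGint1 : Integrable (G (i+1)) μ := by
        rw [hGfun]; exact hIF2.integrable_mul hGint hRint
      have hGone1 : (∫ ω, G (i+1) ω ∂μ) = 1 := by
        have h := hIF2.integral_fun_mul_eq_mul_integral hGint.aestronglyMeasurable hRint.aestronglyMeasurable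
        rw [hGone, hRval, one_mul] at h
        rw [hGfun]
        exact h
      refine ⟨hGint1, hGone1, ?_⟩
      -- split the union
      have hUsucc : U (i+1) = U i ∪ (A (i+1) \ U i) := by
        rw [Set.union_diff_self]
        simp only [hU_def]
        rw [show Finset.Icc 1 (i+1) = insert (i+1) (Finset.Icc 1 i) from by
          rw [← Finset.Ico_add_one_right_eq_Icc (a := 1) (b := i)]
          exact (Finset.Ico_insert_right (by omega)).symm]
        rw [Finset.set_biUnion_insert]
        rw [Set.union_comm]
      have hdisj : Disjoint (U i) (A (i+1) \ U i) := Set.disjoint_sdiff_right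
      have hD_meas : MeasurableSet (A (i+1) \ U i) :=
        ((hMS_le (i+1)) _ (hA_measS (i+1) hi1)).diff (hU_meas i hi)
      have hInd_int : Integrable (Set.indicator (U (i+1)) (G (i+1))) μ :=
        hGint1.indicator (hU_meas (i+1) hi1)
      have hInd_int1 : Integrable (Set.indicator (U i) (G (i+1))) μ :=
        hGint1.indicator (hU_meas i hi)
      have hInd_int2 : Integrable (Set.indicator (A (i+1) \ U i) (G (i+1))) μ :=
        hGint1.indicator hD_meas
      have hsplit_ind : ∀ ω, Set.indicator (U (i+1)) (G (i+1)) ω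
          = Set.indicator (U i) (G (i+1)) ω + Set.indicator (A (i+1) \ U i) (G (i+1)) ω := by
        intro ω
        conv_lhs => rw [hUsucc]
        exact congrFun (Set.indicator_union_of_disjoint hdisj _) ω
      -- term 1
      have hterm1 : ∫ ω, Set.indicator (U i) (G (i+1)) ω ∂μ
          ≥ Real.exp (2 * a * b) * (μ (U i)).toReal := by
        have heq : Set.indicator (U i) (G (i+1))
            = fun ω => Set.indicator (U i) (G i) ω * R ω := by
          funext ω
          by_cases hω : ω ∈ U i
          · rw [Set.indicator_of_mem hω, Set.indicator_of_mem hω, hGsplit]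
          · rw [Set.indicator_of_notMem hω, Set.indicator_of_notMem hω, zero_mul]
        have hmul := hIF.integral_fun_mul_eq_mul_integral (hGint.indicator (hU_meas i hi)).aestronglyMeasurable hRint.aestronglyMeasurable
        rw [hRval, mul_one] at hmul
        have hmul' : (∫ ω, Set.indicator (U i) (G i) ω * R ω ∂μ)
            = ∫ ω, Set.indicator (U i) (G i) ω ∂μ := hmul
        rw [heq, hmul']
        exact hkey
      -- term 2
      have hterm2 : ∫ ω, Set.indicator (A (i+1) \ U i) (G (i+1)) ω ∂μ
          ≥ Real.exp (2 * a * b) * (μ (A (i+1) \ U i)).toReal := by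
        have hlow : ∀ ω, Set.indicator (A (i+1) \ U i) (fun _ => Real.exp (2*a*b)) ω
            ≤ Set.indicator (A (i+1) \ U i) (G (i+1)) ω := by
          intro ω
          by_cases hω : ω ∈ A (i+1) \ U i
          · rw [Set.indicator_of_mem hω, Set.indicator_of_mem hω]
            have hωA : ω ∈ A (i+1) := hω.1
            have hωA' : a + b * z (i+1) < W ω (x - z (i+1)) - W ω x := hωA
            show Real.exp (2*a*b) ≤ Real.exp (2 * b * (W ω (x - z (i+1)) - W ω x) - 2 * b ^ 2 * z (i+1))
            apply Real.exp_le_exp.mpr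
            nlinarith
          · rw [Set.indicator_of_notMem hω, Set.indicator_of_notMem hω]
        have := MeasureTheory.integral_mono ((integrable_const _).indicator hD_meas)
          hInd_int2 hlow
        rwa [MeasureTheory.integral_indicator_const _ hD_meas, smul_eq_mul, mul_comm] at this
      -- combine
      have hmeasadd : (μ (U (i+1))).toReal
          = (μ (U i)).toReal + (μ (A (i+1) \ U i)).toReal := by
        rw [hUsucc, measure_union hdisj hD_meas, ENNReal.toReal_add (measure_ne_top μ _)
          (measure_ne_top μ _)]
      calc Real.exp (2*a*b) * (μ (U (i+1))).toReal
          = Real.exp (2*a*b) * (μ (U i)).toReal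
            + Real.exp (2*a*b) * (μ (A (i+1) \ U i)).toReal := by rw [hmeasadd]; ring
        _ ≤ (∫ ω, Set.indicator (U i) (G (i+1)) ω ∂μ)
            + ∫ ω, Set.indicator (A (i+1) \ U i) (G (i+1)) ω ∂μ := add_le_add hterm1 hterm2
        _ = ∫ ω, (Set.indicator (U i) (G (i+1)) ω
            + Set.indicator (A (i+1) \ U i) (G (i+1)) ω) ∂μ :=
              (MeasureTheory.integral_add hInd_int1 hInd_int2).symm
        _ = ∫ ω, Set.indicator (U (i+1)) (G (i+1)) ω ∂μ :=
              MeasureTheory.integral_congr_ae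
                (Filter.Eventually.of_forall fun ω => (hsplit_ind ω).symm)
  -- conclusion
  obtain ⟨hGint, hGone, hkey⟩ := key n le_rfl
  have hfinal : ∫ ω, Set.indicator (U n) (G n) ω ∂μ ≤ 1 := by
    rw [← hGone]
    refine MeasureTheory.integral_mono (hGint.indicator (hU_meas n le_rfl)) hGint ?_
    intro ω
    exact Set.indicator_le_self' (fun ω _ => (hG_pos n ω).le) ω
  have h1 : Real.exp (2 * a * b) * (μ (U n)).toReal ≤ 1 := le_trans hkey hfinal
  have h2 : (μ (U n)).toReal ≤ Real.exp (-(2 * a * b)) := by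
    rw [Real.exp_neg, inv_eq_one_div, le_div_iff₀ (Real.exp_pos _)]
    linarith [h1]
  calc μ (U n) = ENNReal.ofReal ((μ (U n)).toReal) :=
        (ENNReal.ofReal_toReal (measure_ne_top μ _)).symm
    _ ≤ ENNReal.ofReal (Real.exp (-(2 * a * b))) := ENNReal.ofReal_le_ofReal h2


end AuxLemmas

theorem stmt7 {Ω : Type*} [MeasurableSpace Ω] (μ : Measure Ω) (W : Ω → ℝ → ℝ)
    (hW : IsStdBrownianMotion μ W) (x u v : ℝ)
    (hu : u ∈ Ioc (0:ℝ) 1) (hv : 0 < v) (hx : u ≤ x) :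
    μ {ω | ∃ z : ℝ, u ≤ z ∧ z ≤ x ∧ 0 < W ω (x - z) - W ω x - v * z ^ 2}
      ≤ ENNReal.ofReal (Real.exp (-v ^ 2 * u ^ 3 / 8)) := by
  classical
  obtain ⟨hu0, hu1⟩ := hu
  have hx0 : (0:ℝ) ≤ x := le_trans hu0.le hx
  have hcont : ∀ᵐ ω ∂μ, Continuous (W ω) := hW.2.2.2.1
  set a : ℝ := v * u ^ 2 / 2 with ha_def
  set b : ℝ := v * u / 2 with hb_def
  have ha : 0 < a := by positivity
  have hb : 0 < b := by positivity
  set E : Set Ω := {ω | ∃ z : ℝ, u ≤ z ∧ z ≤ x ∧ 0 < W ω (x - z) - W ω x - v * z ^ 2} with hE_def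
  set C : ℚ → Set Ω := fun q =>
    {ω | 0 < (q:ℝ) ∧ (q:ℝ) ≤ x ∧ a + b * (q:ℝ) < W ω (x - (q:ℝ)) - W ω x} with hC_def
  -- Step A: a.e. inclusion into the rational union
  have hsub : E ∩ {ω | Continuous (W ω)} ⊆ ⋃ q : ℚ, C q := by
    rintro ω ⟨⟨z, huz, hzx, hωz⟩, hωc⟩
    have hWc : Continuous (W ω) := hωc
    set f : ℝ → ℝ := fun y => W ω (x - y) - W ω x - (a + b * y) with hf_def
    have hf_cont : Continuous f := by
      apply Continuous.sub
      · exact (hWc.comp (continuous_const.sub continuous_id)).sub continuous_const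
      · exact continuous_const.add (continuous_const.mul continuous_id)
    have hzpos : 0 < z := lt_of_lt_of_le hu0 huz
    have h1' : v * u * u ≤ v * u * z := mul_le_mul_of_nonneg_left huz (by positivity)
    have h2' : v * u * z ≤ v * z * z :=
      mul_le_mul_of_nonneg_right (mul_le_mul_of_nonneg_left huz hv.le) hzpos.le
    have habz : a + b * z ≤ v * z ^ 2 := by
      rw [ha_def, hb_def]
      nlinarith [h1', h2']
    have hfz : 0 < f z := by
      have hfzeq : f z = W ω (x - z) - W ω x - (a + b * z) := rfl
      have h0 : 0 < W ω (x - z) - W ω x - v * z ^ 2 := hωz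
      rw [hfzeq]
      linarith
    have hopen : IsOpen {y : ℝ | 0 < f y} := isOpen_lt continuous_const hf_cont
    obtain ⟨δ, hδ, hball⟩ := Metric.isOpen_iff.mp hopen z hfz
    have hz0 : 0 < z := lt_of_lt_of_le hu0 huz
    have hlt : max (z - δ) 0 < z := by
      rw [max_lt_iff]; exact ⟨by linarith, hz0⟩
    obtain ⟨q, hq1, hq2⟩ := exists_rat_btwn hlt
    have hq0 : 0 < (q:ℝ) := lt_of_le_of_lt (le_max_right _ _) hq1
    have hqx : (q:ℝ) ≤ x := le_trans hq2.le hzx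
    have hqball : (q:ℝ) ∈ Metric.ball z δ := by
      rw [Real.ball_eq_Ioo]
      constructor
      · exact lt_of_le_of_lt (le_max_left _ _) hq1
      · linarith
    have hqf : 0 < f q := hball hqball
    refine Set.mem_iUnion.mpr ⟨q, hq0, hqx, ?_⟩
    have hfq : f q = W ω (x - (q:ℝ)) - W ω x - (a + b * (q:ℝ)) := rfl
    rw [hfq] at hqf
    linarith
  -- Step B: bound the measure by the rational union
  have hEsub : E ⊆ (⋃ q : ℚ, C q) ∪ {ω | Continuous (W ω)}ᶜ := by
    intro ω hω
    by_cases hc : Continuous (W ω)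
    · exact Or.inl (hsub ⟨hω, hc⟩)
    · exact Or.inr hc
  have hnull : μ ({ω | Continuous (W ω)}ᶜ) = 0 := by
    rw [Set.compl_setOf]
    exact ae_iff.mp hcont
  have hμE : μ E ≤ μ (⋃ q : ℚ, C q) := by
    calc μ E ≤ μ ((⋃ q : ℚ, C q) ∪ {ω | Continuous (W ω)}ᶜ) := measure_mono hEsub
      _ ≤ μ (⋃ q : ℚ, C q) + μ ({ω | Continuous (W ω)}ᶜ) := measure_union_le _ _
      _ = μ (⋃ q : ℚ, C q) := by rw [hnull, add_zero]
  -- Step C: countable union as an increasing limit of finite unions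
  set e : ℕ → ℚ := fun m => (Denumerable.eqv ℚ).symm m with he_def
  have hesurj : Function.Surjective e := (Denumerable.eqv ℚ).symm.surjective
  set P : ℕ → Set Ω := fun N => ⋃ m ∈ Finset.range N, C (e m) with hP_def
  have hPmono : Monotone P := by
    intro N N' hNN'
    exact Set.biUnion_subset_biUnion_left (Finset.range_subset_range.mpr hNN')
  have hPunion : ⋃ N, P N = ⋃ m : ℕ, C (e m) := by
    ext ω
    simp only [hP_def, Set.mem_iUnion, Finset.mem_range, exists_prop]
    constructor
    · rintro ⟨N, m, hmN, hm⟩; exact ⟨m, hm⟩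
    · rintro ⟨m, hm⟩; exact ⟨m + 1, m, Nat.lt_succ_self m, hm⟩
  have hμU : μ (⋃ q : ℚ, C q) = ⨆ N, μ (P N) := by
    rw [← hesurj.iUnion_comp C, ← hPunion]
    exact (hPmono.directed_le).measure_iUnion
  -- Step D: each finite union is bounded via crossing_bound
  have hstepD : ∀ N, μ (P N) ≤ ENNReal.ofReal (Real.exp (-(2 * a * b))) := by
    intro N
    set F : Finset ℝ :=
      (Finset.image (fun m => ((e m : ℚ) : ℝ)) (Finset.range N)).filter
        (fun r => 0 < r ∧ r ≤ x) with hF_def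
    have hFprop : ∀ r ∈ F, 0 < r ∧ r ≤ x := by
      intro r hr
      exact (Finset.mem_filter.mp hr).2
    set oiso := F.orderIsoOfFin rfl with hoiso_def
    set z : ℕ → ℝ := fun k =>
      if hk : 1 ≤ k ∧ k ≤ F.card then (oiso ⟨k - 1, by omega⟩ : ℝ)
      else if k = 0 then 0 else x with hz_def
    have hz0 : z 0 = 0 := by simp [hz_def]
    have hzval : ∀ k, (hk : 1 ≤ k ∧ k ≤ F.card) → z k = (oiso ⟨k - 1, by omega⟩ : ℝ) := by
      intro k hk; simp only [hz_def, dif_pos hk]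
    have hzmem : ∀ k (hk : 1 ≤ k ∧ k ≤ F.card), z k ∈ F := by
      intro k hk
      rw [hzval k hk]
      exact (oiso _).2
    have hzx : ∀ k, z k ≤ x := by
      intro k
      by_cases hk : 1 ≤ k ∧ k ≤ F.card
      · exact (hFprop _ (hzmem k hk)).2
      · simp only [hz_def, dif_neg hk]
        by_cases hk0 : k = 0
        · simp [hk0, hx0]
        · simp [hk0]
    have hzmono : Monotone z := by
      apply monotone_nat_of_le_succ
      intro k
      by_cases hk : 1 ≤ k ∧ k ≤ F.card
      · by_cases hk1 : k + 1 ≤ F.card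
        · rw [hzval k hk, hzval (k+1) ⟨by omega, hk1⟩]
          have : (⟨k - 1, by omega⟩ : Fin F.card) ≤ ⟨k + 1 - 1, by omega⟩ := by
            simp only [Fin.mk_le_mk]; omega
          exact_mod_cast (oiso.monotone this : oiso _ ≤ oiso _)
        · have : z (k+1) = x := by
            simp only [hz_def, dif_neg (by omega : ¬(1 ≤ k + 1 ∧ k + 1 ≤ F.card))]
            simp
          rw [this]
          exact hzx k
      · by_cases hk0 : k = 0
        · subst hk0
          rw [hz0]
          by_cases h1 : 1 ≤ 1 ∧ 1 ≤ F.card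
          · exact (hFprop _ (hzmem 1 h1)).1.le
          · simp only [hz_def, dif_neg h1]
            simpa using hx0
        · have hkc : F.card < k := by
            by_contra hcon
            exact hk ⟨by omega, by omega⟩
          have h1 : z k = x := by
            simp only [hz_def, dif_neg hk]
            simp [hk0]
          have h2 : z (k+1) = x := by
            simp only [hz_def, dif_neg (by omega : ¬(1 ≤ k + 1 ∧ k + 1 ≤ F.card))]
            simp
          rw [h1, h2]
    have hcover : P N ⊆ ⋃ i ∈ Finset.Icc 1 F.card,
        {ω | a + b * z i < W ω (x - z i) - W ω x} := by
      intro ω hω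
      simp only [hP_def, Set.mem_iUnion, Finset.mem_range, exists_prop] at hω
      obtain ⟨m, hmN, hq0, hqx, hqlt⟩ := hω
      have hrF : ((e m : ℚ) : ℝ) ∈ F := by
        rw [hF_def]
        exact Finset.mem_filter.mpr
          ⟨Finset.mem_image.mpr ⟨m, Finset.mem_range.mpr hmN, rfl⟩, hq0, hqx⟩
      obtain ⟨if0, hif0⟩ := oiso.surjective ⟨_, hrF⟩
      have hlt := if0.isLt
      have hzi : z ((if0 : ℕ) + 1) = ((e m : ℚ) : ℝ) := by
        rw [hzval _ ⟨by omega, by omega⟩]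
        have heq : (⟨(if0 : ℕ) + 1 - 1, by omega⟩ : Fin F.card) = if0 := by
          ext; simp
        rw [heq, hif0]
      refine Set.mem_iUnion.mpr ⟨(if0 : ℕ) + 1, Set.mem_iUnion.mpr ⟨?_, ?_⟩⟩
      · exact Finset.mem_Icc.mpr ⟨by omega, by omega⟩
      · show a + b * z ((if0 : ℕ) + 1) < W ω (x - z ((if0 : ℕ) + 1)) - W ω x
        rw [hzi]
        exact hqlt
    calc μ (P N) ≤ μ (⋃ i ∈ Finset.Icc 1 F.card,
          {ω | a + b * z i < W ω (x - z i) - W ω x}) := measure_mono hcover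
      _ ≤ ENNReal.ofReal (Real.exp (-(2 * a * b))) :=
          crossing_bound μ W hW x a b ha hb hx0 F.card z hzmono hz0 hzx
  have hfinal : μ E ≤ ENNReal.ofReal (Real.exp (-(2 * a * b))) := by
    rw [hμU] at hμE
    exact le_trans hμE (iSup_le hstepD)
  refine le_trans hfinal (ENNReal.ofReal_le_ofReal ?_)
  apply Real.exp_le_exp.mpr
  rw [ha_def, hb_def]
  nlinarith [mul_nonneg (sq_nonneg v) (by positivity : (0:ℝ) ≤ u ^ 3)]
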